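/- The graph on the involutions of D_3 (even-signed permutations of {1,2,3}), with edges between involutions at Hamming distance exactly 2, has no Hamilton cycle but has a Hamilton path. -/

import Mathlib

set_option maxRecDepth 10000
set_option maxHeartbeats 1000000
set_option synthInstance.maxSize 2000
set_option synthInstance.maxHeartbeats 2000000

/-- Negation on the signed set. -/
def negS {n : ℕ} (x : Fin n × Bool) : Fin n × Bool := (x.1, !x.2)

/-- Membership in the hyperoctahedral group `B_n`. -/
def IsSigned {n : ℕ} (π : Equiv.Perm (Fin n × Bool)) : Prop :=
  ∀ x, π (negS x) = negS (π x)

/-- Number of negative entries in one-line notation. -/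
def numNeg {n : ℕ} (π : Equiv.Perm (Fin n × Bool)) : ℕ :=
  (Finset.univ.filter fun i : Fin n => (π (i, true)).2 = false).card

/-- An involution of `D_n`. -/
def IsInvD {n : ℕ} (π : Equiv.Perm (Fin n × Bool)) : Prop :=
  IsSigned π ∧ π * π = 1 ∧ Even (numNeg π)

/-- The Hamming distance between signed permutations. -/
def hammingB {n : ℕ} (π σ : Equiv.Perm (Fin n × Bool)) : ℕ :=
  (Finset.univ.filter fun i : Fin n => π (i, true) ≠ σ (i, true)).card

namespace D3Aux

instance instDecIsSigned {n : ℕ} (π : Equiv.Perm (Fin n × Bool)) : Decidable (IsSigned π) :=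
  decidable_of_iff (∀ x, π (negS x) = negS (π x)) Iff.rfl

instance instDecIsInvD {n : ℕ} (π : Equiv.Perm (Fin n × Bool)) : Decidable (IsInvD π) :=
  decidable_of_iff (IsSigned π ∧ π * π = 1 ∧ Even (numNeg π)) Iff.rfl

/-- action of a table on the signed set -/
def step (t : Fin 3 → Fin 3 × Bool) (x : Fin 3 × Bool) : Fin 3 × Bool :=
  ((t x.1).1, x.2 == (t x.1).2)

def mk3 (t : Fin 3 → Fin 3 × Bool) (h1 : ∀ x, step t (step t x) = x) :
    Equiv.Perm (Fin 3 × Bool) := ⟨step t, step t, h1, h1⟩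

def tbl (π : Equiv.Perm (Fin 3 × Bool)) : Fin 3 → Fin 3 × Bool := fun i => π (i, true)

def hammingT (t s : Fin 3 → Fin 3 × Bool) : ℕ :=
  (Finset.univ.filter fun i : Fin 3 => t i ≠ s i).card

theorem hammingB_eq (π σ : Equiv.Perm (Fin 3 × Bool)) :
    hammingB π σ = hammingT (tbl π) (tbl σ) := rfl

theorem hammingT_comm (t s : Fin 3 → Fin 3 × Bool) : hammingT t s = hammingT s t := by
  unfold hammingT
  congr 1
  ext i
  simp [ne_comm]

theorem apply_eq_step {π : Equiv.Perm (Fin 3 × Bool)} (hS : IsSigned π) (x : Fin 3 × Bool) :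
    π x = step (tbl π) x := by
  obtain ⟨i, b⟩ := x
  cases b
  · have h : π (i, false) = negS (π (i, true)) := hS (i, true)
    rw [h]
    show negS (tbl π i) = step (tbl π) (i, false)
    unfold negS step
    cases h2 : (tbl π i).2 <;> simp
  · show π (i, true) = ((π (i, true)).1, true == (π (i, true)).2)
    rw [Bool.true_beq]

theorem invol_tbl {π : Equiv.Perm (Fin 3 × Bool)} (hS : IsSigned π) (hI : π * π = 1) :
    ∀ x, step (tbl π) (step (tbl π) x) = x := by
  intro x
  rw [← apply_eq_step hS, ← apply_eq_step hS]
  have := Equiv.ext_iff.mp hI x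
  simpa using this

theorem eq_of_tbl {π σ : Equiv.Perm (Fin 3 × Bool)} (hπ : IsSigned π) (hσ : IsSigned σ)
    (h : tbl π = tbl σ) : π = σ := by
  apply Equiv.ext
  intro x
  rw [apply_eq_step hπ, apply_eq_step hσ, h]

end D3Aux

namespace D3Aux

def t0 : Fin 3 → Fin 3 × Bool := ![(0,true),(1,true),(2,true)]
def t1 : Fin 3 → Fin 3 × Bool := ![(0,true),(1,false),(2,false)]
def t2 : Fin 3 → Fin 3 × Bool := ![(0,false),(1,true),(2,false)]
def t3 : Fin 3 → Fin 3 × Bool := ![(0,false),(1,false),(2,true)]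
def t4 : Fin 3 → Fin 3 × Bool := ![(0,true),(2,true),(1,true)]
def t5 : Fin 3 → Fin 3 × Bool := ![(0,true),(2,false),(1,false)]
def t6 : Fin 3 → Fin 3 × Bool := ![(1,true),(0,true),(2,true)]
def t7 : Fin 3 → Fin 3 × Bool := ![(1,false),(0,false),(2,true)]
def t8 : Fin 3 → Fin 3 × Bool := ![(2,true),(1,true),(0,true)]
def t9 : Fin 3 → Fin 3 × Bool := ![(2,false),(1,true),(0,false)]

def w0 := mk3 t0 (by decide)
def w1 := mk3 t1 (by decide)
def w2 := mk3 t2 (by decide)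
def w3 := mk3 t3 (by decide)
def w4 := mk3 t4 (by decide)
def w5 := mk3 t5 (by decide)
def w6 := mk3 t6 (by decide)
def w7 := mk3 t7 (by decide)
def w8 := mk3 t8 (by decide)
def w9 := mk3 t9 (by decide)

def L0 : List (Equiv.Perm (Fin 3 × Bool)) := [w4, w5, w1, w2, w8, w9, w0, w6, w7, w3]

theorem classify : ∀ t : Fin 3 → Fin 3 × Bool, (∀ x, step t (step t x) = x) →
    (Finset.univ.filter fun i : Fin 3 => (t i).2 = false).card % 2 = 0 →
    t = t0 ∨ t = t1 ∨ t = t2 ∨ t = t3 ∨ t = t4 ∨ t = t5 ∨ t = t6 ∨ t = t7 ∨ t = t8 ∨ t = t9 := by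
  decide

theorem nbrT4 : ∀ t : Fin 3 → Fin 3 × Bool, (∀ x, step t (step t x) = x) →
    (Finset.univ.filter fun i : Fin 3 => (t i).2 = false).card % 2 = 0 →
    hammingT t t4 = 2 → t = t0 ∨ t = t1 ∨ t = t5 := by decide

theorem nbrT5 : ∀ t : Fin 3 → Fin 3 × Bool, (∀ x, step t (step t x) = x) →
    (Finset.univ.filter fun i : Fin 3 => (t i).2 = false).card % 2 = 0 →
    hammingT t t5 = 2 → t = t0 ∨ t = t1 ∨ t = t4 := by decide

theorem nbrT6 : ∀ t : Fin 3 → Fin 3 × Bool, (∀ x, step t (step t x) = x) →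
    (Finset.univ.filter fun i : Fin 3 => (t i).2 = false).card % 2 = 0 →
    hammingT t t6 = 2 → t = t0 ∨ t = t3 ∨ t = t7 := by decide

theorem nbrT7 : ∀ t : Fin 3 → Fin 3 × Bool, (∀ x, step t (step t x) = x) →
    (Finset.univ.filter fun i : Fin 3 => (t i).2 = false).card % 2 = 0 →
    hammingT t t7 = 2 → t = t0 ∨ t = t3 ∨ t = t6 := by decide

theorem nbrT8 : ∀ t : Fin 3 → Fin 3 × Bool, (∀ x, step t (step t x) = x) →
    (Finset.univ.filter fun i : Fin 3 => (t i).2 = false).card % 2 = 0 →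
    hammingT t t8 = 2 → t = t0 ∨ t = t2 ∨ t = t9 := by decide

theorem nbrT9 : ∀ t : Fin 3 → Fin 3 × Bool, (∀ x, step t (step t x) = x) →
    (Finset.univ.filter fun i : Fin 3 => (t i).2 = false).card % 2 = 0 →
    hammingT t t9 = 2 → t = t0 ∨ t = t2 ∨ t = t8 := by decide

-- table facts about an involution
theorem tbl_facts {π : Equiv.Perm (Fin 3 × Bool)} (h : IsInvD π) :
    (∀ x, step (tbl π) (step (tbl π) x) = x) ∧
    (Finset.univ.filter fun i : Fin 3 => (tbl π i).2 = false).card % 2 = 0 := by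
  obtain ⟨hS, hI, hE⟩ := h
  refine ⟨invol_tbl hS hI, ?_⟩
  have : numNeg π = (Finset.univ.filter fun i : Fin 3 => (tbl π i).2 = false).card := rfl
  rw [← this, ← Nat.even_iff]
  exact hE

theorem s0 : IsSigned w0 := by decide
theorem s1 : IsSigned w1 := by decide
theorem s2 : IsSigned w2 := by decide
theorem s3 : IsSigned w3 := by decide
theorem s4 : IsSigned w4 := by decide
theorem s5 : IsSigned w5 := by decide
theorem s6 : IsSigned w6 := by decide
theorem s7 : IsSigned w7 := by decide
theorem s8 : IsSigned w8 := by decide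
theorem s9 : IsSigned w9 := by decide
theorem u0 : tbl w0 = t0 := by decide
theorem u1 : tbl w1 = t1 := by decide
theorem u2 : tbl w2 = t2 := by decide
theorem u3 : tbl w3 = t3 := by decide
theorem u4 : tbl w4 = t4 := by decide
theorem u5 : tbl w5 = t5 := by decide
theorem u6 : tbl w6 = t6 := by decide
theorem u7 : tbl w7 = t7 := by decide
theorem u8 : tbl w8 = t8 := by decide
theorem u9 : tbl w9 = t9 := by decide

theorem mem_L0_of_invD {π : Equiv.Perm (Fin 3 × Bool)} (h : IsInvD π) : π ∈ L0 := by
  obtain ⟨h1, h2⟩ := tbl_facts h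
  have hS := h.1
  rcases classify (tbl π) h1 h2 with h|h|h|h|h|h|h|h|h|h <;>
    [ (have : π = w0 := eq_of_tbl hS s0 (by rw [h, u0]));
      (have : π = w1 := eq_of_tbl hS s1 (by rw [h, u1]));
      (have : π = w2 := eq_of_tbl hS s2 (by rw [h, u2]));
      (have : π = w3 := eq_of_tbl hS s3 (by rw [h, u3]));
      (have : π = w4 := eq_of_tbl hS s4 (by rw [h, u4]));
      (have : π = w5 := eq_of_tbl hS s5 (by rw [h, u5]));
      (have : π = w6 := eq_of_tbl hS s6 (by rw [h, u6]));
      (have : π = w7 := eq_of_tbl hS s7 (by rw [h, u7]));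
      (have : π = w8 := eq_of_tbl hS s8 (by rw [h, u8]));
      (have : π = w9 := eq_of_tbl hS s9 (by rw [h, u9]))] <;>
    (subst this; simp [L0])

theorem mem_L0_iff (π : Equiv.Perm (Fin 3 × Bool)) : π ∈ L0 ↔ IsInvD π := by
  constructor
  · intro h
    revert π
    decide
  · exact mem_L0_of_invD

end D3Aux

namespace D3Aux

theorem nodup_L0 : L0.Nodup := by decide

theorem path_adj : ∀ i : ℕ, i + 1 < L0.length → hammingB (L0.getD i 1) (L0.getD (i + 1) 1) = 2 := by
  intro i hi
  have h10 : L0.length = 10 := by decide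
  rw [h10] at hi
  have hi' : i < 9 := by omega
  interval_cases i <;> decide

end D3Aux


theorem pairArg {α : Type*} (c : Fin 10 → α) (hInj : Function.Injective c)
    (P : α → Prop) (hMem : ∀ i, P (c i)) (adj : α → α → Prop)
    (hAdj2 : ∀ (i : Fin 10) (d : Fin 10), d = 1 ∨ d = -1 → adj (c (i + d)) (c i))
    (z p q a : α) (k ip : Fin 10) (hk : c k = z) (hip : c ip = p)
    (hcp : ∀ x, P x → adj x p → x = z ∨ x = a ∨ x = q)
    (hcq : ∀ x, P x → adj x q → x = z ∨ x = a ∨ x = p) :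
    ∃ d : Fin 10, (d = 1 ∨ d = -1) ∧ (c (k + d) = p ∨ c (k + d) = q) := by
  by_contra hC
  push_neg at hC
  have neg_pm : ∀ e : Fin 10, (e = 1 ∨ e = -1) → (-e = 1 ∨ -e = -1) := by
    intro e he
    rcases he with rfl | rfl
    · right; rfl
    · left; decide
  have fact1 : ∀ i : Fin 10, i + 1 ≠ i + -1 := by decide
  have fact2 : ∀ i : Fin 10, i + 1 + 1 ≠ i + -1 ∧ i + -1 + -1 ≠ i + 1 := by decide
  have fact3 : ∀ i : Fin 10, i + 1 + 1 ≠ i ∧ i + -1 + -1 ≠ i := by decide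
  have step1 : ∀ e : Fin 10, (e = 1 ∨ e = -1) → c (ip + e) = a ∨ c (ip + e) = q := by
    intro e he
    rcases hcp (c (ip + e)) (hMem _) (hip ▸ hAdj2 ip e he) with h0 | h
    · exfalso
      have hik : ip + e = k := hInj (h0.trans hk.symm)
      have : c (k + -e) = p := by
        rw [← hik, add_neg_cancel_right]
        exact hip
      exact (hC (-e) (neg_pm e he)).1 this
    · exact h
  have hne : c (ip + 1) ≠ c (ip + -1) := fun h => fact1 ip (hInj h)
  -- pick d with c (ip + d) = q and c (ip + -d) = a
  obtain ⟨d, hd, hq', ha'⟩ :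
      ∃ d : Fin 10, (d = 1 ∨ d = -1) ∧ c (ip + d) = q ∧ c (ip + -d) = a := by
    rcases step1 1 (Or.inl rfl) with ha1 | hq1
    · rcases step1 (-1) (Or.inr rfl) with ha2 | hq2
      · exact absurd (ha1.trans ha2.symm) hne
      · exact ⟨-1, Or.inr rfl, hq2, by rw [neg_neg]; exact ha1⟩
    · rcases step1 (-1) (Or.inr rfl) with ha2 | hq2
      · exact ⟨1, Or.inl rfl, hq1, ha2⟩
      · exact absurd (hq1.trans hq2.symm) hne
  have hfar : adj (c (ip + d + d)) q := by
    have := hAdj2 (ip + d) d hd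
    rwa [hq'] at this
  rcases hcq (c (ip + d + d)) (hMem _) hfar with h0 | ha'' | hp'
  · have hik : ip + d + d = k := hInj (h0.trans hk.symm)
    have : c (k + -d) = q := by
      rw [← hik, add_neg_cancel_right]
      exact hq'
    exact (hC (-d) (neg_pm d hd)).2 this
  · have := hInj (ha''.trans ha'.symm)
    rcases hd with rfl | rfl
    · exact (fact2 ip).1 this
    · exact (fact2 ip).2 this
  · have := hInj (hp'.trans hip.symm)
    rcases hd with rfl | rfl
    · exact (fact3 ip).1 this
    · exact (fact3 ip).2 this


namespace D3Aux

theorem nbrP4 : ∀ x, IsInvD x → hammingT (tbl x) (tbl w4) = 2 → x = w0 ∨ x = w1 ∨ x = w5 := by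
  intro x hx hh
  obtain ⟨h1, h2⟩ := tbl_facts hx
  rcases nbrT4 (tbl x) h1 h2 (u4 ▸ hh) with h | h | h
  · exact Or.inl (eq_of_tbl hx.1 s0 (h.trans u0.symm))
  · exact Or.inr (Or.inl (eq_of_tbl hx.1 s1 (h.trans u1.symm)))
  · exact Or.inr (Or.inr (eq_of_tbl hx.1 s5 (h.trans u5.symm)))

theorem nbrP5 : ∀ x, IsInvD x → hammingT (tbl x) (tbl w5) = 2 → x = w0 ∨ x = w1 ∨ x = w4 := by
  intro x hx hh
  obtain ⟨h1, h2⟩ := tbl_facts hx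
  rcases nbrT5 (tbl x) h1 h2 (u5 ▸ hh) with h | h | h
  · exact Or.inl (eq_of_tbl hx.1 s0 (h.trans u0.symm))
  · exact Or.inr (Or.inl (eq_of_tbl hx.1 s1 (h.trans u1.symm)))
  · exact Or.inr (Or.inr (eq_of_tbl hx.1 s4 (h.trans u4.symm)))

theorem nbrP6 : ∀ x, IsInvD x → hammingT (tbl x) (tbl w6) = 2 → x = w0 ∨ x = w3 ∨ x = w7 := by
  intro x hx hh
  obtain ⟨h1, h2⟩ := tbl_facts hx
  rcases nbrT6 (tbl x) h1 h2 (u6 ▸ hh) with h | h | h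
  · exact Or.inl (eq_of_tbl hx.1 s0 (h.trans u0.symm))
  · exact Or.inr (Or.inl (eq_of_tbl hx.1 s3 (h.trans u3.symm)))
  · exact Or.inr (Or.inr (eq_of_tbl hx.1 s7 (h.trans u7.symm)))

theorem nbrP7 : ∀ x, IsInvD x → hammingT (tbl x) (tbl w7) = 2 → x = w0 ∨ x = w3 ∨ x = w6 := by
  intro x hx hh
  obtain ⟨h1, h2⟩ := tbl_facts hx
  rcases nbrT7 (tbl x) h1 h2 (u7 ▸ hh) with h | h | h
  · exact Or.inl (eq_of_tbl hx.1 s0 (h.trans u0.symm))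
  · exact Or.inr (Or.inl (eq_of_tbl hx.1 s3 (h.trans u3.symm)))
  · exact Or.inr (Or.inr (eq_of_tbl hx.1 s6 (h.trans u6.symm)))

theorem nbrP8 : ∀ x, IsInvD x → hammingT (tbl x) (tbl w8) = 2 → x = w0 ∨ x = w2 ∨ x = w9 := by
  intro x hx hh
  obtain ⟨h1, h2⟩ := tbl_facts hx
  rcases nbrT8 (tbl x) h1 h2 (u8 ▸ hh) with h | h | h
  · exact Or.inl (eq_of_tbl hx.1 s0 (h.trans u0.symm))
  · exact Or.inr (Or.inl (eq_of_tbl hx.1 s2 (h.trans u2.symm)))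
  · exact Or.inr (Or.inr (eq_of_tbl hx.1 s9 (h.trans u9.symm)))

theorem nbrP9 : ∀ x, IsInvD x → hammingT (tbl x) (tbl w9) = 2 → x = w0 ∨ x = w2 ∨ x = w8 := by
  intro x hx hh
  obtain ⟨h1, h2⟩ := tbl_facts hx
  rcases nbrT9 (tbl x) h1 h2 (u9 ▸ hh) with h | h | h
  · exact Or.inl (eq_of_tbl hx.1 s0 (h.trans u0.symm))
  · exact Or.inr (Or.inl (eq_of_tbl hx.1 s2 (h.trans u2.symm)))
  · exact Or.inr (Or.inr (eq_of_tbl hx.1 s8 (h.trans u8.symm)))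

end D3Aux

open D3Aux in
theorem D3_no_hamilton_cycle_but_path :
    (¬ ∃ L : List (Equiv.Perm (Fin 3 × Bool)),
      L.Nodup ∧ (∀ π, π ∈ L ↔ IsInvD π) ∧
      (∀ i : ℕ, i + 1 < L.length → hammingB (L.getD i 1) (L.getD (i + 1) 1) = 2) ∧
      hammingB (L.getD (L.length - 1) 1) (L.getD 0 1) = 2) ∧
    (∃ L : List (Equiv.Perm (Fin 3 × Bool)),
      L.Nodup ∧ (∀ π, π ∈ L ↔ IsInvD π) ∧
      (∀ i : ℕ, i + 1 < L.length → hammingB (L.getD i 1) (L.getD (i + 1) 1) = 2)) := by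
  constructor
  · rintro ⟨L, hN, hM, hA, hW⟩
    have hmem : ∀ a, a ∈ L ↔ a ∈ L0 := fun a => (hM a).trans (mem_L0_iff a).symm
    have hperm : L.Perm L0 := (List.perm_ext_iff_of_nodup hN nodup_L0).mpr hmem
    have hLen : L.length = 10 := hperm.length_eq.trans rfl
    set c : Fin 10 → Equiv.Perm (Fin 3 × Bool) := fun i => L.getD i.val 1 with hcdef
    have hcg : ∀ i : Fin 10, ∀ h : (i : ℕ) < L.length, c i = L.get ⟨i.val, h⟩ := by
      intro i h
      rw [hcdef]
      exact List.getD_eq_get _ _ ⟨i.val, h⟩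
    have hInj : Function.Injective c := by
      intro i j h
      have hi : (i : ℕ) < L.length := by have := i.isLt; omega
      have hj : (j : ℕ) < L.length := by have := j.isLt; omega
      rw [hcg i hi, hcg j hj] at h
      have := List.nodup_iff_injective_get.mp hN h
      rw [Fin.mk.injEq] at this
      exact Fin.ext this
    have hMemc : ∀ i : Fin 10, IsInvD (c i) := by
      intro i
      have hi : (i : ℕ) < L.length := by have := i.isLt; omega
      have : c i ∈ L := by
        rw [hcg i hi]
        exact List.get_mem L _
      exact (hM _).mp this
    rw [hLen] at hW
    have hAdjF : ∀ i : Fin 10, hammingT (tbl (c i)) (tbl (c (i + 1))) = 2 := by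
      intro i
      by_cases h9 : (i : ℕ) = 9
      · have hi9 : i = (9 : Fin 10) := Fin.ext (by simpa using h9)
        subst hi9
        have h01 : (9 + 1 : Fin 10) = 0 := by decide
        rw [h01]
        exact hW
      · have hib := i.isLt
        have hv : ((i + 1 : Fin 10) : ℕ) = (i : ℕ) + 1 := by
          rw [Fin.val_add]
          show ((i : ℕ) + 1) % 10 = (i : ℕ) + 1
          omega
        have hres := hA i.val (by omega)
        show hammingT (tbl (L.getD (i : ℕ) 1)) (tbl (L.getD ((i + 1 : Fin 10) : ℕ) 1)) = 2
        rw [hv]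
        exact hres
    have hAdj2 : ∀ (i : Fin 10) (d : Fin 10), d = 1 ∨ d = -1 →
        hammingT (tbl (c (i + d))) (tbl (c i)) = 2 := by
      intro i d hd
      rcases hd with rfl | rfl
      · rw [hammingT_comm]
        exact hAdjF i
      · have h := hAdjF (i + -1)
        have he : (i + -1) + 1 = i := neg_add_cancel_right i 1
        rwa [he] at h
    have hpos : ∀ π : Equiv.Perm (Fin 3 × Bool), IsInvD π → ∃ i : Fin 10, c i = π := by
      intro π h
      have hmL : π ∈ L := (hM π).mpr h
      obtain ⟨n, he⟩ := List.mem_iff_get.mp hmL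
      exact ⟨⟨n.val, by have := n.isLt; omega⟩,
        (hcg _ (by have := n.isLt; omega)).trans he⟩
    obtain ⟨k, hk⟩ := hpos w0 (by decide)
    obtain ⟨i4, hi4⟩ := hpos w4 (by decide)
    obtain ⟨i6, hi6⟩ := hpos w6 (by decide)
    obtain ⟨i8, hi8⟩ := hpos w8 (by decide)
    have E1 := pairArg c hInj IsInvD hMemc (fun x y => hammingT (tbl x) (tbl y) = 2)
      hAdj2 w0 w4 w5 w1 k i4 hk hi4 nbrP4 nbrP5
    have E2 := pairArg c hInj IsInvD hMemc (fun x y => hammingT (tbl x) (tbl y) = 2)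
      hAdj2 w0 w6 w7 w3 k i6 hk hi6 nbrP6 nbrP7
    have E3 := pairArg c hInj IsInvD hMemc (fun x y => hammingT (tbl x) (tbl y) = 2)
      hAdj2 w0 w8 w9 w2 k i8 hk hi8 nbrP8 nbrP9
    obtain ⟨d1, hd1, h1⟩ := E1
    obtain ⟨d2, hd2, h2⟩ := E2
    obtain ⟨d3, hd3, h3⟩ := E3
    rcases hd1 with rfl | rfl <;> rcases hd2 with rfl | rfl <;> rcases hd3 with rfl | rfl <;>
      rcases h1 with h1 | h1 <;> rcases h2 with h2 | h2 <;> rcases h3 with h3 | h3 <;>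
      first
      | exact absurd (h1.symm.trans h2) (by decide)
      | exact absurd (h1.symm.trans h3) (by decide)
      | exact absurd (h2.symm.trans h3) (by decide)
  · exact ⟨L0, nodup_L0, mem_L0_iff, path_adj⟩
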